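/- Let q be a prime power and n a positive integer. A subset U ⊆ P_q(n) containing the zero subspace {0} and closed under subspace sum and intersection (i.e., a sublattice of the linear lattice P_q(n)) that is atomistic and distributive as a lattice and admits a complement function f : U → U, is a linear code closed under intersection with F_q^n ∈ U; conversely, every linear code in P_q(n) closed under intersection with F_q^n ∈ U is an atomistic distributive sublattice of P_q(n) on which a complement function exists. -/
import Mathlib


open Module

/-- The subspace distance `d_S(X, Y) = dim(X + Y) - dim(X ∩ Y)`. -/
noncomputable def subspaceDist {F V : Type*} [Field F] [AddCommGroup V] [Module F V]
    (X Y : Submodule F V) : ℕ :=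
  finrank F ↥(X ⊔ Y) - finrank F ↥(X ⊓ Y)

/-- `U ⊆ P_q(n)` is a linear code: `{0} ∈ U` and there is an operation `⊞` on `U`
making it an abelian group with identity `{0}`, every element self-inverse, and the
subspace distance translation invariant. -/
def IsLinearCode {F V : Type*} [Field F] [AddCommGroup V] [Module F V]
    (U : Set (Submodule F V)) : Prop :=
  ∃ (h0 : ⊥ ∈ U) (op : U → U → U),
    (∀ X Y, op X Y = op Y X) ∧
    (∀ X Y Z, op (op X Y) Z = op X (op Y Z)) ∧
    (∀ X, op X ⟨⊥, h0⟩ = X) ∧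
    (∀ X, op X X = ⟨⊥, h0⟩) ∧
    (∀ X Y W, subspaceDist (op X W : Submodule F V) (op Y W : Submodule F V) =
      subspaceDist (X : Submodule F V) (Y : Submodule F V))

/-- `f : U → U` is a complement function on `U ⊆ P_q(n)`: for every `X ∈ U`,
`X ∩ f(X) = {0}` and `X + f(X) = F_q^n`, `dim f(X) = n - dim X`, `f(f(X)) = X`, and
`f` preserves the subspace distance. -/
def IsComplementFun {F V : Type*} [Field F] [AddCommGroup V] [Module F V]
    (n : ℕ) (U : Set (Submodule F V)) (f : U → U) : Prop :=
  (∀ X : U, (X : Submodule F V) ⊓ (f X : Submodule F V) = ⊥ ∧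
    (X : Submodule F V) ⊔ (f X : Submodule F V) = ⊤) ∧
  (∀ X : U, finrank F ↥(f X : Submodule F V) = n - finrank F ↥(X : Submodule F V)) ∧
  (∀ X : U, f (f X) = X) ∧
  (∀ X Y : U, subspaceDist (f X : Submodule F V) (f Y : Submodule F V) =
    subspaceDist (X : Submodule F V) (Y : Submodule F V))

namespace Statement14Aux

variable {F V : Type*} [Field F] [AddCommGroup V] [Module F V]

/-- `A` is an atom of `U`. -/
def IsAtomOf (U : Set (Submodule F V)) (A : Submodule F V) : Prop :=
  A ∈ U ∧ ⊥ < A ∧ ∀ B ∈ U, ⊥ < B → ¬ B < A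

section FinDim

variable [FiniteDimensional F V]

lemma dist_add_eq (X Y : Submodule F V) :
    subspaceDist X Y + 2 * finrank F ↥(X ⊓ Y) = finrank F ↥X + finrank F ↥Y := by
  have h := Submodule.finrank_sup_add_finrank_inf_eq X Y
  have hle : finrank F ↥(X ⊓ Y) ≤ finrank F ↥(X ⊔ Y) :=
    Submodule.finrank_mono (le_trans inf_le_left le_sup_left)
  unfold subspaceDist
  omega

lemma dist_bot (X : Submodule F V) : subspaceDist X ⊥ = finrank F ↥X := by
  unfold subspaceDist
  rw [sup_bot_eq, inf_bot_eq, finrank_bot]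
  omega

/-- Bundled linear-code structure. -/
structure CodeStruct (U : Set (Submodule F V)) where
  h0 : ⊥ ∈ U
  op : U → U → U
  comm : ∀ X Y, op X Y = op Y X
  assoc : ∀ X Y Z, op (op X Y) Z = op X (op Y Z)
  idr : ∀ X, op X ⟨⊥, h0⟩ = X
  invol : ∀ X, op X X = ⟨⊥, h0⟩
  hdist : ∀ X Y W, subspaceDist (op X W : Submodule F V) (op Y W : Submodule F V) =
      subspaceDist (X : Submodule F V) (Y : Submodule F V)

variable {U : Set (Submodule F V)} (c : CodeStruct U)

lemma CodeStruct.idl (X : U) : c.op ⟨⊥, c.h0⟩ X = X := by rw [c.comm]; exact c.idr X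

lemma CodeStruct.cancel {X Y W : U} (h : c.op X W = c.op Y W) : X = Y := by
  have h2 : c.op (c.op X W) W = c.op (c.op Y W) W := by rw [h]
  rwa [c.assoc, c.assoc, c.invol, c.idr, c.idr] at h2

lemma CodeStruct.finrank_op (X Y : U) :
    finrank F ↥(c.op X Y : Submodule F V)
      = subspaceDist (X : Submodule F V) (Y : Submodule F V) := by
  have h := c.hdist X Y Y
  rw [c.invol] at h
  have hb : ((⟨⊥, c.h0⟩ : U) : Submodule F V) = ⊥ := rfl
  rw [hb, dist_bot] at h
  exact h

/-- If `X ≤ Y` then `op X Y` is a complement of `X` inside `Y`. -/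
lemma CodeStruct.compl_in (X Y : U) (hXY : (X : Submodule F V) ≤ (Y : Submodule F V)) :
    (c.op X Y : Submodule F V) ⊓ (X : Submodule F V) = ⊥ ∧
    (c.op X Y : Submodule F V) ≤ (Y : Submodule F V) ∧
    (c.op X Y : Submodule F V) ⊔ (X : Submodule F V) = (Y : Submodule F V) ∧
    finrank F ↥(c.op X Y : Submodule F V) + finrank F ↥(X : Submodule F V)
      = finrank F ↥(Y : Submodule F V) := by
  set Z := c.op X Y with hZ
  set a := finrank F ↥(X : Submodule F V)
  set b := finrank F ↥(Y : Submodule F V)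
  have hb : ((⟨⊥, c.h0⟩ : U) : Submodule F V) = ⊥ := rfl
  have hXiY : (X : Submodule F V) ⊓ (Y : Submodule F V) = X := inf_eq_left.mpr hXY
  have hd := dist_add_eq (X : Submodule F V) (Y : Submodule F V)
  rw [hXiY] at hd
  have hz : finrank F ↥(Z : Submodule F V) + a = b := by
    rw [hZ, c.finrank_op]; omega
  -- d(Z, X) = b
  have h2 : subspaceDist (Z : Submodule F V) (X : Submodule F V) = b := by
    have h := c.hdist Y ⟨⊥, c.h0⟩ X
    rw [c.idl, c.comm Y X, hb, dist_bot] at h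
    exact h
  have h3 := dist_add_eq (Z : Submodule F V) (X : Submodule F V)
  rw [h2] at h3
  have hZXbot : (Z : Submodule F V) ⊓ (X : Submodule F V) = ⊥ :=
    Submodule.finrank_eq_zero.mp (by omega)
  -- d(Z, Y) = a
  have h4 : subspaceDist (Z : Submodule F V) (Y : Submodule F V) = a := by
    have h := c.hdist X ⟨⊥, c.h0⟩ Y
    rw [c.idl, hb, dist_bot] at h
    exact h
  have h5 := dist_add_eq (Z : Submodule F V) (Y : Submodule F V)
  rw [h4] at h5
  have hZY : (Z : Submodule F V) ≤ (Y : Submodule F V) := by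
    have hle : finrank F ↥(Z : Submodule F V) ≤ finrank F ↥((Z : Submodule F V) ⊓ Y) := by
      omega
    have := Submodule.eq_of_le_of_finrank_le
      (inf_le_left : (Z : Submodule F V) ⊓ (Y : Submodule F V) ≤ Z) hle
    exact inf_eq_left.mp this
  refine ⟨hZXbot, hZY, ?_, by omega⟩
  have hsle : (Z : Submodule F V) ⊔ (X : Submodule F V) ≤ Y := sup_le hZY hXY
  have h6 := Submodule.finrank_sup_add_finrank_inf_eq (Z : Submodule F V) (X : Submodule F V)
  rw [hZXbot, finrank_bot] at h6
  exact Submodule.eq_of_le_of_finrank_le hsle (by omega)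

/-- `(X ⊞ Y) ⊞ (X ⊓ Y) = X ⊔ Y`. -/
lemma CodeStruct.op_op_inf (X Y W : U)
    (hW : (W : Submodule F V) = (X : Submodule F V) ⊓ (Y : Submodule F V)) :
    (c.op (c.op X Y) W : Submodule F V) = (X : Submodule F V) ⊔ (Y : Submodule F V) := by
  have hb : ((⟨⊥, c.h0⟩ : U) : Submodule F V) = ⊥ := rfl
  have hWX : (W : Submodule F V) ≤ (X : Submodule F V) := hW ▸ inf_le_left
  have hWY : (W : Submodule F V) ≤ (Y : Submodule F V) := hW ▸ inf_le_right
  obtain ⟨hY'W, hY'le, hY'sup, hY'rank⟩ := c.compl_in W Y hWY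
  obtain ⟨hX'W, hX'le, hX'sup, hX'rank⟩ := c.compl_in W X hWX
  have hrT : finrank F ↥(c.op (c.op X Y) W : Submodule F V)
      = subspaceDist (X : Submodule F V) (c.op W Y : Submodule F V) := by
    have h := c.hdist (c.op X Y) W Y
    have e1 : c.op (c.op X Y) Y = X := by rw [c.assoc, c.invol, c.idr]
    rw [e1] at h
    rw [c.finrank_op]
    exact h.symm
  have hXY' : (X : Submodule F V) ⊓ (c.op W Y : Submodule F V) = ⊥ := by
    have h1 : (X : Submodule F V) ⊓ (c.op W Y : Submodule F V)
        ≤ (c.op W Y : Submodule F V) ⊓ (W : Submodule F V) :=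
      le_inf inf_le_right (hW ▸ le_inf inf_le_left (le_trans inf_le_right hY'le))
    rw [hY'W] at h1
    exact le_bot_iff.mp h1
  have hd1 := dist_add_eq (X : Submodule F V) (c.op W Y : Submodule F V)
  rw [hXY', finrank_bot] at hd1
  have hrT2 : finrank F ↥(c.op (c.op X Y) W : Submodule F V)
      + finrank F ↥(W : Submodule F V)
      = finrank F ↥(X : Submodule F V) + finrank F ↥(Y : Submodule F V) := by
    rw [hrT]; omega
  have hXT : (X : Submodule F V) ≤ (c.op (c.op X Y) W : Submodule F V) := by
    have e : c.op (c.op W Y) X = c.op (c.op X Y) W := by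
      rw [c.comm (c.op W Y) X, c.comm W Y, ← c.assoc]
    have h := c.hdist (c.op W Y) ⟨⊥, c.h0⟩ X
    rw [c.idl, hb, dist_bot, e] at h
    have hd := dist_add_eq (c.op (c.op X Y) W : Submodule F V) (X : Submodule F V)
    rw [h] at hd
    have hle : finrank F ↥(X : Submodule F V)
        ≤ finrank F ↥((c.op (c.op X Y) W : Submodule F V) ⊓ (X : Submodule F V)) := by
      omega
    exact inf_eq_right.mp (Submodule.eq_of_le_of_finrank_le inf_le_right hle)
  have hYT : (Y : Submodule F V) ≤ (c.op (c.op X Y) W : Submodule F V) := by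
    have e : c.op (c.op W X) Y = c.op (c.op X Y) W := by
      rw [c.comm W X, c.assoc, c.comm W Y, ← c.assoc]
    have h := c.hdist (c.op W X) ⟨⊥, c.h0⟩ Y
    rw [c.idl, hb, dist_bot, e] at h
    have hd := dist_add_eq (c.op (c.op X Y) W : Submodule F V) (Y : Submodule F V)
    rw [h] at hd
    have hle : finrank F ↥(Y : Submodule F V)
        ≤ finrank F ↥((c.op (c.op X Y) W : Submodule F V) ⊓ (Y : Submodule F V)) := by
      omega
    exact inf_eq_right.mp (Submodule.eq_of_le_of_finrank_le inf_le_right hle)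
  have hsle : (X : Submodule F V) ⊔ (Y : Submodule F V) ≤ c.op (c.op X Y) W :=
    sup_le hXT hYT
  have hr := Submodule.finrank_sup_add_finrank_inf_eq (X : Submodule F V) (Y : Submodule F V)
  rw [← hW] at hr
  exact (Submodule.eq_of_le_of_finrank_le hsle (by omega)).symm

variable (hinf : ∀ X ∈ U, ∀ Y ∈ U, X ⊓ Y ∈ U)

include c hinf in
lemma CodeStruct.sup_mem : ∀ X ∈ U, ∀ Y ∈ U, X ⊔ Y ∈ U := by
  intro X hX Y hY
  have h := c.op_op_inf ⟨X, hX⟩ ⟨Y, hY⟩ ⟨X ⊓ Y, hinf X hX Y hY⟩ rfl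
  rw [← h]
  exact (c.op (c.op ⟨X, hX⟩ ⟨Y, hY⟩) ⟨X ⊓ Y, hinf X hX Y hY⟩).2

include hinf in
lemma CodeStruct.op_le_sup (X Y : U) :
    (c.op X Y : Submodule F V) ≤ (X : Submodule F V) ⊔ (Y : Submodule F V) := by
  set W : U := ⟨(X : Submodule F V) ⊓ (Y : Submodule F V), hinf _ X.2 _ Y.2⟩ with hWdef
  have hT := c.op_op_inf X Y W rfl
  set T := c.op (c.op X Y) W with hTdef
  have hWT : (W : Submodule F V) ≤ (T : Submodule F V) := by
    rw [hT]; exact le_trans inf_le_left le_sup_left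
  have hopWT := (c.compl_in W T hWT).2.1
  have he : c.op W T = c.op X Y := by
    rw [c.comm W T, hTdef, c.assoc, c.invol, c.idr]
  rw [he] at hopWT
  rwa [hT] at hopWT

include hinf in
lemma CodeStruct.op_eq_sup (X Y : U)
    (h : (X : Submodule F V) ⊓ (Y : Submodule F V) = ⊥) :
    (c.op X Y : Submodule F V) = (X : Submodule F V) ⊔ (Y : Submodule F V) := by
  have hle := c.op_le_sup hinf X Y
  have hd := dist_add_eq (X : Submodule F V) (Y : Submodule F V)
  rw [h] at hd
  have hr := Submodule.finrank_sup_add_finrank_inf_eq (X : Submodule F V) (Y : Submodule F V)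
  rw [h] at hr
  have hfb : finrank F ↥((⊥ : Submodule F V)) = 0 := finrank_bot F V
  have hz := c.finrank_op X Y
  exact Submodule.eq_of_le_of_finrank_le hle (by omega)

include hinf in
lemma atom_inf_bot {A X : Submodule F V} (hA : IsAtomOf U A) (hX : X ∈ U)
    (h : ¬ A ≤ X) : A ⊓ X = ⊥ := by
  by_contra hne
  have hlt : ⊥ < A ⊓ X := bot_lt_iff_ne_bot.mpr hne
  have hlt2 : A ⊓ X < A := lt_of_le_of_ne inf_le_left (fun he => h (inf_eq_left.mp he))
  exact hA.2.2 (A ⊓ X) (hinf A hA.1 X hX) hlt hlt2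

lemma exists_atom_le : ∀ (k : ℕ), ∀ X ∈ U, ⊥ < X → finrank F ↥X ≤ k →
    ∃ A, IsAtomOf U A ∧ A ≤ X := by
  intro k
  induction k with
  | zero =>
    intro X hX hlt hk
    exact absurd (Submodule.finrank_eq_zero.mp (Nat.le_zero.mp hk)) hlt.ne'
  | succ k ih =>
    intro X hX hlt hk
    by_cases hA : ∀ B ∈ U, ⊥ < B → ¬ B < X
    · exact ⟨X, ⟨hX, hlt, hA⟩, le_rfl⟩
    · push_neg at hA
      obtain ⟨B, hBU, hBlt, hBX⟩ := hA
      have hkB : finrank F ↥B ≤ k := by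
        have := Submodule.finrank_lt_finrank_of_lt hBX; omega
      obtain ⟨A, hAat, hAB⟩ := ih B hBU hBlt hkB
      exact ⟨A, hAat, le_trans hAB hBX.le⟩

include c in
lemma CodeStruct.atomistic_aux : ∀ (k : ℕ), ∀ X, (hX : X ∈ U) → finrank F ↥X ≤ k →
    ∃ S : Finset (Submodule F V), (∀ A ∈ S, IsAtomOf U A) ∧ X = S.sup id := by
  intro k
  induction k with
  | zero =>
    intro X hX hk
    have : X = ⊥ := Submodule.finrank_eq_zero.mp (Nat.le_zero.mp hk)
    exact ⟨∅, by simp, by simp [this]⟩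
  | succ k ih =>
    intro X hX hk
    by_cases hbot : X = ⊥
    · exact ⟨∅, by simp, by simp [hbot]⟩
    · have hlt : ⊥ < X := bot_lt_iff_ne_bot.mpr hbot
      obtain ⟨A, hAat, hAX⟩ := exists_atom_le (finrank F ↥X) X hX hlt le_rfl
      obtain ⟨hZA, hZle, hZsup, hZrank⟩ := c.compl_in ⟨A, hAat.1⟩ ⟨X, hX⟩ hAX
      have eA : ((⟨A, hAat.1⟩ : U) : Submodule F V) = A := rfl
      have eX : ((⟨X, hX⟩ : U) : Submodule F V) = X := rfl
      rw [eA, eX] at hZsup hZrank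
      set Z := c.op ⟨A, hAat.1⟩ ⟨X, hX⟩ with hZ
      have hApos : 0 < finrank F ↥A := by
        rcases Nat.eq_zero_or_pos (finrank F ↥A) with h | h
        · exact absurd (Submodule.finrank_eq_zero.mp h) hAat.2.1.ne'
        · exact h
      have hkZ : finrank F ↥(Z : Submodule F V) ≤ k := by omega
      obtain ⟨S', hS'at, hS'eq⟩ := ih (Z : Submodule F V) Z.2 hkZ
      classical
      refine ⟨insert A S', ?_, ?_⟩
      · intro B hB
        rcases Finset.mem_insert.mp hB with h | h
        · exact h ▸ hAat
        · exact hS'at B h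
      · rw [Finset.sup_insert, ← hS'eq]
        show X = A ⊔ (Z : Submodule F V)
        rw [← hZsup, sup_comm]

include c hinf in
/-- Key structural fact: an atom of `U` not in a finite set of atoms of `U` is not
below the sup of that set. -/
lemma CodeStruct.not_atom_le_sup (S : Finset (Submodule F V))
    (hS : ∀ A ∈ S, IsAtomOf U A) (A : Submodule F V) (hA : IsAtomOf U A) (hAS : A ∉ S) :
    ¬ A ≤ S.sup id := by
  intro hle
  classical
  have hSU : S.sup id ∈ U := by
    clear hle hAS
    induction S using Finset.induction_on with
    | empty => simpa using c.h0
    | @insert a s ha ih =>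
      rw [Finset.sup_insert]
      exact c.sup_mem hinf _ (hS a (Finset.mem_insert_self a s)).1 _
        (ih fun B hB => hS B (Finset.mem_insert_of_mem hB))
  obtain ⟨hDA, hDP, hDsup, hDrank⟩ := c.compl_in ⟨A, hA.1⟩ ⟨S.sup id, hSU⟩ hle
  have eA : ((⟨A, hA.1⟩ : U) : Submodule F V) = A := rfl
  have eP : ((⟨S.sup id, hSU⟩ : U) : Submodule F V) = S.sup id := rfl
  simp only [eA, eP] at hDA hDP hDsup hDrank
  set D := c.op (⟨A, hA.1⟩ : U) (⟨S.sup id, hSU⟩ : U) with hDdef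
  have hApos : 0 < finrank F ↥A := by
    rcases Nat.eq_zero_or_pos (finrank F ↥A) with h | h
    · exact absurd (Submodule.finrank_eq_zero.mp h) hA.2.1.ne'
    · exact h
  by_cases hall : ∀ B ∈ S, B ≤ (D : Submodule F V)
  · have hPD : S.sup id ≤ (D : Submodule F V) := Finset.sup_le fun B hB => hall B hB
    have hfin : finrank F ↥(S.sup id) ≤ finrank F ↥(D : Submodule F V) :=
      Submodule.finrank_mono hPD
    omega
  · push_neg at hall
    obtain ⟨B, hBS, hBD⟩ := hall
    have hB := hS B hBS
    have hBpos : 0 < finrank F ↥B := by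
      rcases Nat.eq_zero_or_pos (finrank F ↥B) with h | h
      · exact absurd (Submodule.finrank_eq_zero.mp h) hB.2.1.ne'
      · exact h
    have hBDbot : B ⊓ (D : Submodule F V) = ⊥ := atom_inf_bot hinf hB D.2 hBD
    have hE : (c.op ⟨B, hB.1⟩ D : Submodule F V) = B ⊔ (D : Submodule F V) :=
      c.op_eq_sup hinf ⟨B, hB.1⟩ D hBDbot
    have hBP : B ≤ S.sup id := Finset.le_sup (f := id) hBS
    by_cases hAB : A ≤ B ⊔ (D : Submodule F V)
    · have h1 : B ⊔ (D : Submodule F V) = S.sup id := by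
        refine le_antisymm (sup_le hBP hDP) ?_
        rw [← hDsup]
        exact sup_le le_sup_right hAB
      have h2 : (c.op ⟨A, hA.1⟩ D : Submodule F V) = A ⊔ (D : Submodule F V) :=
        c.op_eq_sup hinf ⟨A, hA.1⟩ D (by rw [inf_comm]; exact hDA)
      have h3 : c.op (⟨B, hB.1⟩ : U) D = c.op (⟨A, hA.1⟩ : U) D := by
        apply Subtype.ext
        rw [hE, h2, h1, ← hDsup, sup_comm]
      have h4 := c.cancel h3
      have hBA : B = A := congrArg Subtype.val h4
      exact hAS (hBA ▸ hBS)
    · have hBDU : B ⊔ (D : Submodule F V) ∈ U := hE ▸ (c.op ⟨B, hB.1⟩ D).2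
      have hAbot : A ⊓ (B ⊔ (D : Submodule F V)) = ⊥ := atom_inf_bot hinf hA hBDU hAB
      have hsum1 := Submodule.finrank_sup_add_finrank_inf_eq A (B ⊔ (D : Submodule F V))
      rw [hAbot, finrank_bot] at hsum1
      have hsum2 := Submodule.finrank_sup_add_finrank_inf_eq B (D : Submodule F V)
      rw [hBDbot, finrank_bot] at hsum2
      have hle2 : A ⊔ (B ⊔ (D : Submodule F V)) ≤ S.sup id :=
        sup_le hle (sup_le hBP hDP)
      have hle3 := Submodule.finrank_mono hle2
      omega

end FinDim

section Shared

variable [FiniteDimensional F V] {U : Set (Submodule F V)}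
variable (h0 : ⊥ ∈ U)
variable (hsup : ∀ X ∈ U, ∀ Y ∈ U, X ⊔ Y ∈ U)
variable (hinf : ∀ X ∈ U, ∀ Y ∈ U, X ⊓ Y ∈ U)
variable (hC : ∀ S : Finset (Submodule F V), (∀ A ∈ S, IsAtomOf U A) →
    ∀ A, IsAtomOf U A → A ∉ S → ¬ A ≤ S.sup id)
variable [DecidableEq (Submodule F V)]

include h0 hsup in
lemma sup_mem_of_forall (S : Finset (Submodule F V)) (hS : ∀ A ∈ S, A ∈ U) :
    S.sup id ∈ U := by
  classical
  revert hS
  induction S using Finset.induction_on with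
  | empty => intro _; simpa using h0
  | @insert a s ha ih =>
    intro hS
    rw [Finset.sup_insert]
    exact hsup _ (hS a (Finset.mem_insert_self a s)) _
      (ih fun B hB => hS B (Finset.mem_insert_of_mem hB))

include h0 hsup hinf hC in
lemma finrank_sup_eq_sum (S : Finset (Submodule F V)) (hS : ∀ A ∈ S, IsAtomOf U A) :
    finrank F ↥(S.sup id) = ∑ A ∈ S, finrank F ↥A := by
  classical
  revert hS
  induction S using Finset.induction_on with
  | empty => intro _; simp [finrank_bot]
  | @insert a s ha ih =>
    intro hS
    have hs : ∀ A ∈ s, IsAtomOf U A := fun B hB => hS B (Finset.mem_insert_of_mem hB)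
    have hsU : s.sup id ∈ U := sup_mem_of_forall h0 hsup s (fun B hB => (hs B hB).1)
    have ha2 : a ⊓ s.sup id = ⊥ :=
      atom_inf_bot hinf (hS a (Finset.mem_insert_self a s)) hsU (hC s hs a
        (hS a (Finset.mem_insert_self a s)) ha)
    have hr := Submodule.finrank_sup_add_finrank_inf_eq a (s.sup id)
    rw [ha2, finrank_bot] at hr
    rw [Finset.sup_insert, Finset.sum_insert ha, ← ih hs]
    have : id a = a := rfl
    rw [this]
    omega

include h0 hsup hinf hC in
lemma sup_inf_sup
    (hatomistic : ∀ X ∈ U, ∃ S : Finset (Submodule F V),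
      (∀ A ∈ S, IsAtomOf U A) ∧ X = S.sup id)
    (S T : Finset (Submodule F V)) (hS : ∀ A ∈ S, IsAtomOf U A)
    (hT : ∀ A ∈ T, IsAtomOf U A) :
    S.sup id ⊓ T.sup id = (S ∩ T).sup id := by
  classical
  have hSU : S.sup id ∈ U := sup_mem_of_forall h0 hsup S (fun A hA => (hS A hA).1)
  have hTU : T.sup id ∈ U := sup_mem_of_forall h0 hsup T (fun A hA => (hT A hA).1)
  have hM : S.sup id ⊓ T.sup id ∈ U := hinf _ hSU _ hTU
  obtain ⟨W, hW, hWeq⟩ := hatomistic _ hM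
  apply le_antisymm
  · rw [hWeq]
    apply Finset.sup_le
    intro A hAW
    have hAatom := hW A hAW
    have hAleW : A ≤ W.sup id := Finset.le_sup (f := id) hAW
    have hAle : A ≤ S.sup id ⊓ T.sup id := hWeq ▸ hAleW
    have hAS : A ∈ S := by
      by_contra h
      exact hC S hS A hAatom h (le_trans hAle inf_le_left)
    have hAT : A ∈ T := by
      by_contra h
      exact hC T hT A hAatom h (le_trans hAle inf_le_right)
    exact Finset.le_sup (f := id) (Finset.mem_inter.mpr ⟨hAS, hAT⟩)
  · exact le_inf (Finset.sup_mono Finset.inter_subset_left)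
      (Finset.sup_mono Finset.inter_subset_right)

include hC in
lemma decomp_unique (S T : Finset (Submodule F V)) (hS : ∀ A ∈ S, IsAtomOf U A)
    (hT : ∀ A ∈ T, IsAtomOf U A) (h : S.sup id = T.sup id) : S = T := by
  ext A
  constructor
  · intro hA
    by_contra hAT
    exact hC T hT A (hS A hA) hAT (h ▸ Finset.le_sup (f := id) hA)
  · intro hA
    by_contra hAS
    exact hC S hS A (hT A hA) hAS (h ▸ Finset.le_sup (f := id) hA)

include h0 hsup hinf hC in
lemma forward_isLinearCode
    (hatomistic : ∀ X ∈ U, ∃ S : Finset (Submodule F V),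
      (∀ A ∈ S, IsAtomOf U A) ∧ X = S.sup id) :
    IsLinearCode U := by
  classical
  choose dec hdec1 hdec2 using hatomistic
  set D : U → Finset (Submodule F V) := fun X => dec X.1 X.2 with hDdef
  have hDatom : ∀ X : U, ∀ A ∈ D X, IsAtomOf U A := fun X => hdec1 X.1 X.2
  have hDsup : ∀ X : U, (X : Submodule F V) = (D X).sup id := fun X => hdec2 X.1 X.2
  have hDuniq : ∀ (X : U) (S : Finset (Submodule F V)), (∀ A ∈ S, IsAtomOf U A) →
      (X : Submodule F V) = S.sup id → D X = S := by
    intro X S hSat h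
    exact decomp_unique hC (D X) S (hDatom X) hSat (by rw [← hDsup X, ← h])
  have hsymmatom : ∀ X Y : U, ∀ A ∈ symmDiff (D X) (D Y), IsAtomOf U A := by
    intro X Y A hA
    rcases Finset.mem_symmDiff.mp hA with ⟨h1, _⟩ | ⟨h1, _⟩
    · exact hDatom X A h1
    · exact hDatom Y A h1
  have hmem : ∀ X Y : U, (symmDiff (D X) (D Y)).sup id ∈ U := fun X Y =>
    sup_mem_of_forall h0 hsup _ (fun A hA => (hsymmatom X Y A hA).1)
  set op : U → U → U := fun X Y => ⟨(symmDiff (D X) (D Y)).sup id, hmem X Y⟩ with hopdef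
  have hDop : ∀ X Y : U, D (op X Y) = symmDiff (D X) (D Y) := fun X Y =>
    hDuniq _ _ (hsymmatom X Y) rfl
  have hDbot : D ⟨⊥, h0⟩ = ∅ := hDuniq _ ∅ (by simp) (by simp)
  have key : ∀ S T : Finset (Submodule F V), (∀ A ∈ S, IsAtomOf U A) →
      (∀ A ∈ T, IsAtomOf U A) →
      subspaceDist (S.sup id) (T.sup id) = ∑ A ∈ symmDiff S T, finrank F ↥A := by
    intro S T hSat hTat
    have h1 : S.sup id ⊔ T.sup id = (S ∪ T).sup id := Finset.sup_union.symm
    have h2 : S.sup id ⊓ T.sup id = (S ∩ T).sup id :=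
      sup_inf_sup h0 hsup hinf hC (fun X hX => ⟨dec X hX, hdec1 X hX, hdec2 X hX⟩) S T hSat hTat
    have hUat : ∀ A ∈ S ∪ T, IsAtomOf U A := by
      intro A hA
      rcases Finset.mem_union.mp hA with h | h
      exacts [hSat A h, hTat A h]
    have hIat : ∀ A ∈ S ∩ T, IsAtomOf U A := fun A hA =>
      hSat A (Finset.mem_inter.mp hA).1
    have hsplit : ∑ A ∈ S ∪ T, finrank F ↥A
        = ∑ A ∈ symmDiff S T, finrank F ↥A + ∑ A ∈ S ∩ T, finrank F ↥A := by
      rw [← Finset.sum_union (by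
        have := disjoint_symmDiff_inf S T
        simpa [Finset.inf_eq_inter] using this)]
      congr 1
      have := symmDiff_sup_inf S T
      simpa [Finset.sup_eq_union, Finset.inf_eq_inter] using this.symm
    unfold subspaceDist
    rw [h1, h2, finrank_sup_eq_sum h0 hsup hinf hC (S ∪ T) hUat,
      finrank_sup_eq_sum h0 hsup hinf hC (S ∩ T) hIat, hsplit]
    omega
  refine ⟨h0, op, ?_, ?_, ?_, ?_, ?_⟩
  · intro X Y
    apply Subtype.ext
    show (symmDiff (D X) (D Y)).sup id = (symmDiff (D Y) (D X)).sup id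
    rw [symmDiff_comm]
  · intro X Y Z
    apply Subtype.ext
    show (symmDiff (D (op X Y)) (D Z)).sup id = (symmDiff (D X) (D (op Y Z))).sup id
    rw [hDop, hDop, symmDiff_assoc]
  · intro X
    apply Subtype.ext
    show (symmDiff (D X) (D ⟨⊥, h0⟩)).sup id = (X : Submodule F V)
    rw [hDbot, ← Finset.bot_eq_empty, symmDiff_bot, ← hDsup]
  · intro X
    apply Subtype.ext
    show (symmDiff (D X) (D X)).sup id = (⊥ : Submodule F V)
    rw [symmDiff_self, Finset.bot_eq_empty, Finset.sup_empty]
  · intro X Y W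
    have e1 : subspaceDist (op X W : Submodule F V) (op Y W : Submodule F V)
        = ∑ A ∈ symmDiff (symmDiff (D X) (D W)) (symmDiff (D Y) (D W)), finrank F ↥A := by
      have := key (symmDiff (D X) (D W)) (symmDiff (D Y) (D W))
        (hsymmatom X W) (hsymmatom Y W)
      exact this
    have e2 : subspaceDist (X : Submodule F V) (Y : Submodule F V)
        = ∑ A ∈ symmDiff (D X) (D Y), finrank F ↥A := by
      have := key (D X) (D Y) (hDatom X) (hDatom Y)
      rw [hDsup X, hDsup Y]
      exact this
    rw [e1, e2]
    congr 1
    rw [symmDiff_assoc, symmDiff_comm (D Y) (D W), symmDiff_symmDiff_cancel_left]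

end Shared

end Statement14Aux

open Statement14Aux in
/-- A subset `U` of `P_q(n)` containing `{0}`, closed under subspace sum
and intersection, atomistic and distributive as a lattice, and admitting a complement
function, is exactly the same thing as a linear code closed under intersection that
contains `F_q^n`. -/
theorem distrib_sublattice_with_complement_iff_linear_code
    (q n : ℕ) (hq : IsPrimePow q) (hn : 0 < n)
    (F V : Type*) [Field F] [Fintype F] (hF : Fintype.card F = q)
    [AddCommGroup V] [Module F V] [FiniteDimensional F V] (hV : finrank F V = n)
    (U : Set (Submodule F V)) :
    (⊥ ∈ U ∧
      (∀ X ∈ U, ∀ Y ∈ U, X ⊔ Y ∈ U) ∧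
      (∀ X ∈ U, ∀ Y ∈ U, X ⊓ Y ∈ U) ∧
      (∀ X ∈ U, ∃ S : Finset (Submodule F V),
        (∀ A ∈ S, A ∈ U ∧ ⊥ < A ∧ ∀ B ∈ U, ⊥ < B → ¬ B < A) ∧ X = S.sup id) ∧
      (∀ X ∈ U, ∀ Y ∈ U, ∀ Z ∈ U, X ⊔ (Y ⊓ Z) = (X ⊔ Y) ⊓ (X ⊔ Z)) ∧
      (∃ f : U → U, IsComplementFun n U f))
    ↔ (IsLinearCode U ∧ (∀ X ∈ U, ∀ Y ∈ U, X ⊓ Y ∈ U) ∧ (⊤ : Submodule F V) ∈ U) := by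
  constructor
  · rintro ⟨h0, hsup, hinf, hatom, hdistr, f, hf⟩
    classical
    have hatom' : ∀ X ∈ U, ∃ S : Finset (Submodule F V),
        (∀ A ∈ S, IsAtomOf U A) ∧ X = S.sup id := hatom
    -- dual distributivity
    have mdistr : ∀ x ∈ U, ∀ y ∈ U, ∀ z ∈ U, x ⊓ (y ⊔ z) = (x ⊓ y) ⊔ (x ⊓ z) := by
      intro x hx y hy z hz
      have h1 := hdistr (x ⊓ y) (hinf x hx y hy) x hx z hz
      have h2 := hdistr z hz x hx y hy
      have e1 : x ⊓ y ⊔ x = x := by rw [sup_comm, sup_inf_self]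
      rw [e1] at h1
      calc x ⊓ (y ⊔ z) = x ⊓ (z ⊔ y) := by rw [sup_comm]
        _ = (x ⊓ (z ⊔ x)) ⊓ (z ⊔ y) := by rw [sup_comm z x, inf_sup_self]
        _ = x ⊓ ((z ⊔ x) ⊓ (z ⊔ y)) := by rw [inf_assoc]
        _ = x ⊓ (z ⊔ x ⊓ y) := by rw [← h2]
        _ = x ⊓ (x ⊓ y ⊔ z) := by rw [sup_comm]
        _ = x ⊓ y ⊔ x ⊓ z := by rw [h1]
    -- distinct atoms intersect trivially
    have hatoms_inf : ∀ A B : Submodule F V, IsAtomOf U A → IsAtomOf U B → A ≠ B →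
        A ⊓ B = ⊥ := by
      intro A B hA hB hne
      refine atom_inf_bot hinf hA hB.1 (fun hle => ?_)
      exact hB.2.2 A hA.1 hA.2.1 (lt_of_le_of_ne hle hne)
    -- key claim
    have hC : ∀ S : Finset (Submodule F V), (∀ A ∈ S, IsAtomOf U A) →
        ∀ A, IsAtomOf U A → A ∉ S → ¬ A ≤ S.sup id := by
      intro S hS A hA hAS hle
      classical
      have hbot : A ⊓ S.sup id = ⊥ := by
        clear hle
        revert hS hAS
        induction S using Finset.induction_on with
        | empty => intro _ _; simp
        | @insert a s ha ih =>
          intro hS hAS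
          have hs : ∀ B ∈ s, IsAtomOf U B := fun B hB => hS B (Finset.mem_insert_of_mem hB)
          have hsU : s.sup id ∈ U := sup_mem_of_forall h0 hsup s (fun B hB => (hs B hB).1)
          have haU : a ∈ U := (hS a (Finset.mem_insert_self a s)).1
          rw [Finset.sup_insert]
          have : id a = a := rfl
          rw [this, mdistr A hA.1 a haU (s.sup id) hsU]
          rw [hatoms_inf A a hA (hS a (Finset.mem_insert_self a s))
            (fun h => hAS (h ▸ Finset.mem_insert_self a s)),
            ih hs (fun h => hAS (Finset.mem_insert_of_mem h)), sup_bot_eq]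
      have : A = ⊥ := by rw [← inf_eq_left.mpr hle]; exact hbot
      exact hA.2.1.ne' this
    refine ⟨forward_isLinearCode h0 hsup hinf hC hatom', hinf, ?_⟩
    have h1 := (hf.1 ⟨⊥, h0⟩).2
    have h2 : ((⟨⊥, h0⟩ : U) : Submodule F V) = ⊥ := rfl
    rw [h2, bot_sup_eq] at h1
    exact h1 ▸ (f ⟨⊥, h0⟩).2
  · rintro ⟨⟨h0, op, hcomm, hassoc, hid, hinv, hdist⟩, hinf, hTop⟩
    classical
    set c : CodeStruct U := ⟨h0, op, hcomm, hassoc, hid, hinv, hdist⟩ with hc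
    have hsup : ∀ X ∈ U, ∀ Y ∈ U, X ⊔ Y ∈ U := c.sup_mem hinf
    have hC : ∀ S : Finset (Submodule F V), (∀ A ∈ S, IsAtomOf U A) →
        ∀ A, IsAtomOf U A → A ∉ S → ¬ A ≤ S.sup id := fun S hS A hA hAS =>
      c.not_atom_le_sup hinf S hS A hA hAS
    have hatomistic : ∀ X ∈ U, ∃ S : Finset (Submodule F V),
        (∀ A ∈ S, IsAtomOf U A) ∧ X = S.sup id := fun X hX =>
      c.atomistic_aux (finrank F ↥X) X hX le_rfl
    refine ⟨h0, hsup, hinf, hatomistic, ?_, ?_⟩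
    · -- distributivity
      intro X hX Y hY Z hZ
      obtain ⟨SX, hSX, hXeq⟩ := hatomistic X hX
      obtain ⟨SY, hSY, hYeq⟩ := hatomistic Y hY
      obtain ⟨SZ, hSZ, hZeq⟩ := hatomistic Z hZ
      have hXY : ∀ A ∈ SX ∪ SY, IsAtomOf U A := by
        intro A hA
        rcases Finset.mem_union.mp hA with h | h
        exacts [hSX A h, hSY A h]
      have hXZ : ∀ A ∈ SX ∪ SZ, IsAtomOf U A := by
        intro A hA
        rcases Finset.mem_union.mp hA with h | h
        exacts [hSX A h, hSZ A h]
      have h1 : Y ⊓ Z = (SY ∩ SZ).sup id := by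
        rw [hYeq, hZeq]
        exact sup_inf_sup h0 hsup hinf hC hatomistic SY SZ hSY hSZ
      have h2 : (X ⊔ Y) ⊓ (X ⊔ Z) = ((SX ∪ SY) ∩ (SX ∪ SZ)).sup id := by
        rw [hXeq, hYeq, hZeq, ← Finset.sup_union, ← Finset.sup_union]
        exact sup_inf_sup h0 hsup hinf hC hatomistic _ _ hXY hXZ
      rw [h1, h2, hXeq, ← Finset.sup_union, Finset.union_inter_distrib_left]
    · -- complement function
      refine ⟨fun X => c.op X ⟨⊤, hTop⟩, ?_, ?_, ?_, ?_⟩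
      · intro X
        obtain ⟨hb, _, hs, _⟩ := c.compl_in X ⟨⊤, hTop⟩ le_top
        exact ⟨by rw [inf_comm]; exact hb, by rw [sup_comm]; exact hs⟩
      · intro X
        obtain ⟨_, _, _, hr⟩ := c.compl_in X ⟨⊤, hTop⟩ le_top
        have htop : finrank F ↥((⟨⊤, hTop⟩ : U) : Submodule F V) = n := by
          show finrank F ↥(⊤ : Submodule F V) = n
          rw [finrank_top]; exact hV
        rw [htop] at hr
        show finrank F ↥(c.op X ⟨⊤, hTop⟩ : Submodule F V)
          = n - finrank F ↥(X : Submodule F V)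
        omega
      · intro X
        show c.op (c.op X ⟨⊤, hTop⟩) ⟨⊤, hTop⟩ = X
        rw [c.assoc, c.invol, c.idr]
      · intro X Y
        exact c.hdist X Y ⟨⊤, hTop⟩
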